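/- With Ω the 2-form defined from vector fields u, B and scalar φ on ℝ⁴ as Ω = -(∇φ + u×B)·dx ∧ dt + B·(dx∧dx), one has the identity (1/2) Ω ∧ Ω = -(B·∇φ) dx ∧ dy ∧ dz ∧ dt. In particular Ω is nondegenerate (symplectic, given it is closed) at a point if and only if B·∇φ ≠ 0 there. -/

import Mathlib

noncomputable section
open scoped BigOperators

/-- ℝ³ as `Fin 3 → ℝ`. -/
abbrev V3 : Type := Fin 3 → ℝ
/-- space-time point `(t, x)` in `ℝ × ℝ³`. -/
abbrev Pt : Type := ℝ × V3

/-- time partial derivative `∂f/∂t`. -/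
def pdt (f : Pt → ℝ) (p : Pt) : ℝ := fderiv ℝ f p (1, 0)
/-- spatial partial derivative `∂f/∂xᵢ`. -/
def pdx (i : Fin 3) (f : Pt → ℝ) (p : Pt) : ℝ := fderiv ℝ f p (0, Pi.single i 1)
/-- spatial gradient `∇f`. -/
def grad (f : Pt → ℝ) (p : Pt) : V3 := fun i => pdx i f p
/-- spatial divergence `∇·u`. -/
def vdiv (u : Pt → V3) (p : Pt) : ℝ := ∑ i, pdx i (fun q => u q i) p
/-- spatial curl `∇×u`. -/
def curl (u : Pt → V3) (p : Pt) : V3 :=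
  ![pdx 1 (fun q => u q 2) p - pdx 2 (fun q => u q 1) p,
    pdx 2 (fun q => u q 0) p - pdx 0 (fun q => u q 2) p,
    pdx 0 (fun q => u q 1) p - pdx 1 (fun q => u q 0) p]
/-- cross product in ℝ³. -/
def cross (a b : V3) : V3 :=
  ![a 1 * b 2 - a 2 * b 1, a 2 * b 0 - a 0 * b 2, a 0 * b 1 - a 1 * b 0]
/-- dot product in ℝ³. -/
def dot (a b : V3) : ℝ := ∑ i, a i * b i
/-- directional derivative `(a·∇)b`. -/
def adv (a b : Pt → V3) (p : Pt) : V3 := fun i => ∑ j, a p j * pdx j (fun q => b q i) p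
/-- Lie bracket of (time-dependent) vector fields on ℝ³: `[a,b] = (a·∇)b - (b·∇)a`. -/
def brkt (a b : Pt → V3) : Pt → V3 := fun p i => adv a b p i - adv b a p i
/-- material derivative `∂f/∂t + u·∇f`. -/
def matD (u : Pt → V3) (f : Pt → ℝ) (p : Pt) : ℝ := pdt f p + ∑ i, u p i * pdx i f p

/-- coordinate directions on space-time ℝ⁴ = ℝ × ℝ³ : (t,x,y,z). -/
def e4 : Fin 4 → Pt := ![((1:ℝ), 0), (0, Pi.single 0 1), (0, Pi.single 1 1), (0, Pi.single 2 1)]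
/-- partial derivative along the μ-th coordinate of space-time. -/
def D4 (μ : Fin 4) (f : Pt → ℝ) (p : Pt) : ℝ := fderiv ℝ f p (e4 μ)

/-- The coefficient matrix `Ω_{μν}` (in the basis `dx^μ ∧ dx^ν`, `x⁰ = t`) of the 2-form
`Ω = -G·dx ∧ dt + B·(dx∧dx)`, i.e. `Ω = G_i dt∧dx^i + B₁ dy∧dz + B₂ dz∧dx + B₃ dx∧dy`. -/
def Omega2 (G B : Pt → V3) : Fin 4 → Fin 4 → Pt → ℝ :=
  ![![fun _ => 0,        fun p => G p 0,    fun p => G p 1,    fun p => G p 2],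
    ![fun p => -G p 0,   fun _ => 0,        fun p => B p 2,    fun p => -B p 1],
    ![fun p => -G p 1,   fun p => -B p 2,   fun _ => 0,        fun p => B p 0],
    ![fun p => -G p 2,   fun p => B p 1,    fun p => -B p 0,   fun _ => 0]]

/-- with `Ω = -(∇φ + u×B)·dx ∧ dt + B·(dx∧dx)`, the Liouville volume identity
`(1/2) Ω ∧ Ω = -(B·∇φ) dx∧dy∧dz∧dt` holds; in coordinates, the coefficient of
`(1/2)Ω∧Ω` in the basis `dt∧dx∧dy∧dz` (which is `-(dx∧dy∧dz∧dt)`) is the Pfaffian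
`Ω₀₁Ω₂₃ - Ω₀₂Ω₁₃ + Ω₀₃Ω₁₂ = B·∇φ`.  Moreover `Ω` is nondegenerate at `p`
(its coefficient matrix has nonzero determinant) iff `B·∇φ ≠ 0` at `p`. -/
theorem Omega_wedge_Omega_eq_potential_vorticity
    (u B : Pt → V3) (φ : Pt → ℝ) :
    ∀ p : Pt,
      (Omega2 (fun q => grad φ q + cross (u q) (B q)) B 0 1 p
          * Omega2 (fun q => grad φ q + cross (u q) (B q)) B 2 3 p
        - Omega2 (fun q => grad φ q + cross (u q) (B q)) B 0 2 p
          * Omega2 (fun q => grad φ q + cross (u q) (B q)) B 1 3 p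
        + Omega2 (fun q => grad φ q + cross (u q) (B q)) B 0 3 p
          * Omega2 (fun q => grad φ q + cross (u q) (B q)) B 1 2 p
        = dot (B p) (grad φ p))
      ∧ ((Matrix.det (Matrix.of fun μ ν : Fin 4 =>
            Omega2 (fun q => grad φ q + cross (u q) (B q)) B μ ν p) ≠ 0)
          ↔ dot (B p) (grad φ p) ≠ 0) := by
  intro p
  have hpf : Omega2 (fun q => grad φ q + cross (u q) (B q)) B 0 1 p
          * Omega2 (fun q => grad φ q + cross (u q) (B q)) B 2 3 p
        - Omega2 (fun q => grad φ q + cross (u q) (B q)) B 0 2 p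
          * Omega2 (fun q => grad φ q + cross (u q) (B q)) B 1 3 p
        + Omega2 (fun q => grad φ q + cross (u q) (B q)) B 0 3 p
          * Omega2 (fun q => grad φ q + cross (u q) (B q)) B 1 2 p
        = dot (B p) (grad φ p) := by
    simp [Omega2, cross, dot, grad, Fin.sum_univ_three, Pi.add_apply]
    ring
  refine ⟨hpf, ?_⟩
  have hdet : Matrix.det (Matrix.of fun μ ν : Fin 4 =>
      Omega2 (fun q => grad φ q + cross (u q) (B q)) B μ ν p)
      = (dot (B p) (grad φ p))^2 := by
    rw [← hpf]
    simp [Matrix.det_succ_row_zero, Fin.sum_univ_succ, Omega2, Fin.succAbove, Fin.castSucc, Fin.castAdd, Fin.castLE]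
    ring
  rw [hdet]
  constructor
  · intro h hc; exact h (by rw [hc]; ring)
  · intro h; exact pow_ne_zero 2 h
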